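/- Suppose either ($1 \le p \le 2$ and $s > 0$) or ($2 < p < \infty$ and $s > 1/2 - 1/(2p)$). Then there exist constants $C > 0$ and $\varepsilon > 0$ such that for every $N \in \mathbb{N}$ and every $a : \mathbb{Z} \to \mathbb{C}$ with $\| \langle n \rangle^{s} a(n) \|_{\ell^p_n} < \infty$, $\left| \sum_{|n| > N} \ \sum_{\substack{(n_1, n_2, n_3) \in \Lambda(n) \\ 4 n_1^2 \le |n_3|, \ 4 n_2^2 \le |n_3|}} \frac{n \, n_3}{3 (n_1+n_2)(n_1+n_3)(n_2+n_3)} \, a(n_1) \, \overline{a(-n_2)} \, a(n_3) \, \overline{a(n)} \right| \le C \, N^{-\varepsilon} \, \| \langle n \rangle^{s} a(n) \|_{\ell^p_n}^4$. -/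

import Mathlib

/-- The Japanese bracket `⟨x⟩ = (1 + |x|²)^(1/2)`. -/
noncomputable def jb (x : ℝ) : ℝ := Real.sqrt (1 + x ^ 2)

lemma jb_nonneg (x : ℝ) : 0 ≤ jb x := Real.sqrt_nonneg _

lemma one_le_jb (x : ℝ) : 1 ≤ jb x := by
  rw [jb]
  nlinarith [Real.sq_sqrt (show (0:ℝ) ≤ 1 + x^2 by positivity), Real.sqrt_nonneg (1+x^2), sq_nonneg x]

lemma jb_pos (x : ℝ) : 0 < jb x := lt_of_lt_of_le one_pos (one_le_jb x)

lemma abs_le_jb (x : ℝ) : |x| ≤ jb x := by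
  rw [jb, ← Real.sqrt_sq_eq_abs]
  exact Real.sqrt_le_sqrt (by nlinarith)

lemma rpow_neg_anti {x y t : ℝ} (hx : 0 < x) (hxy : x ≤ y) (ht : 0 ≤ t) :
    y ^ (-t) ≤ x ^ (-t) := by
  rw [Real.rpow_neg (le_trans hx.le hxy), Real.rpow_neg hx.le]
  exact inv_anti₀ (Real.rpow_pos_of_pos hx t) (Real.rpow_le_rpow hx.le hxy ht)

lemma summable_jb_rpow {t : ℝ} (ht : 1 < t) : Summable (fun k : ℤ => jb (k:ℝ) ^ (-t)) := by
  have h0 : Summable (fun m : ℤ => |(m:ℝ)| ^ (-t) + if m = 0 then 1 else 0) := by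
    apply (Real.summable_abs_int_rpow ht).add
    apply summable_of_ne_finset_zero (s := {0})
    intro m hm
    simp at hm; simp [hm]
  apply h0.of_nonneg_of_le (fun k => Real.rpow_nonneg (jb_nonneg _) _)
  intro k
  have ht0 : (0:ℝ) ≤ t := le_trans zero_le_one ht.le
  by_cases hk : k = 0
  · subst hk
    have : jb ((0:ℤ):ℝ) = 1 := by norm_num [jb]
    rw [this, Real.one_rpow]
    rw [if_pos rfl]
    nlinarith [Real.rpow_nonneg (abs_nonneg ((0:ℤ):ℝ)) (-t)]
  · have h1 : (1:ℝ) ≤ |(k:ℝ)| := by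
      rw [← Int.cast_abs]; exact_mod_cast Int.one_le_abs (by simpa using hk)
    have h2 := rpow_neg_anti (lt_of_lt_of_le one_pos h1) (abs_le_jb (k:ℝ)) ht0
    calc jb (k:ℝ) ^ (-t) ≤ |(k:ℝ)| ^ (-t) := h2
      _ ≤ _ := by simp [hk]

lemma jb_le_two_jb {x y : ℝ} (h : |x| ≤ 2 * |y|) : jb x ≤ 2 * jb y := by
  rw [jb, jb, show 2 * Real.sqrt (1+y^2) = Real.sqrt (4*(1+y^2)) by
    rw [show (4:ℝ)*(1+y^2) = 2^2*(1+y^2) by ring, Real.sqrt_mul (by positivity),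
      Real.sqrt_sq (by norm_num)]]
  apply Real.sqrt_le_sqrt
  nlinarith [sq_abs x, sq_abs y, abs_nonneg x, abs_nonneg y]

lemma half_rpow {y x s : ℝ} (hy : 0 < y) (hs : 0 ≤ s) (hle : y ≤ 2 * x) :
    x ^ (-s) ≤ 2^s * y^(-s) := by
  calc x ^ (-s) ≤ (y/2) ^ (-s) := rpow_neg_anti (by positivity) (by linarith) hs
    _ = 2^s * y^(-s) := by
        rw [Real.div_rpow hy.le (by norm_num), Real.rpow_neg (by norm_num : (0:ℝ) ≤ 2)]
        field_simp

lemma sq_le_rpow_trade {u y s : ℝ} (hu : 0 < u) (hs : 0 ≤ s) (h : u^2 ≤ y) :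
    y ^ (-s) ≤ u ^ (-(2*s)) := by
  calc y ^ (-s) ≤ (u^2) ^ (-s) := rpow_neg_anti (by positivity) h hs
    _ = u ^ (-(2*s)) := by
        rw [← Real.rpow_natCast u 2, ← Real.rpow_mul hu.le]
        norm_num

lemma assemble {K A1 A2 A3 A4 J1 J2 J3 J4 E3 E4 minv Ns c w2 W : ℝ}
    (hA1 : 0 ≤ A1) (hA2 : 0 ≤ A2) (hA3 : 0 ≤ A3) (hA4 : 0 ≤ A4)
    (hJ3 : 0 ≤ J3) (hJ4 : 0 ≤ J4) (hE3 : 0 ≤ E3) (hE4nn : 0 ≤ E4)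
    (hc : 0 ≤ c) (hNs : 0 ≤ Ns) (hw2 : 0 ≤ w2) (hminv : 0 ≤ minv)
    (hKpos : 0 ≤ K) (hK : K ≤ 3 * minv)
    (h31 : E3 * J3 = 1) (h41 : E4 * J4 = 1)
    (hJ1 : 1 ≤ J1) (hJ2 : 1 ≤ J2)
    (hE4 : E4 ≤ c * E3) (hE33 : E3 * E3 ≤ (c * Ns) * w2)
    (hW : minv * w2 = W) :
    K*A1*A2*A3*A4 ≤ 3*c*c*Ns*(W*((J1*A1)*((J2*A2)*((J3*A3)*(J4*A4))))) := by
  have key34 : A3*A4 = (E3*E4)*((J3*A3)*(J4*A4)) := by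
    have h : (E3*E4)*((J3*A3)*(J4*A4)) = (E3*J3)*((E4*J4)*(A3*A4)) := by ring
    rw [h, h31, h41]; ring
  have e1 : K*A1*A2*A3*A4 = (K*(E3*E4))*(A1*(A2*((J3*A3)*(J4*A4)))) := by
    rw [show K*A1*A2*A3*A4 = K*(A3*A4)*(A1*A2) by ring, key34]; ring
  have P34 : 0 ≤ (J3*A3)*(J4*A4) :=
    mul_nonneg (mul_nonneg hJ3 hA3) (mul_nonneg hJ4 hA4)
  have b1 : E3*E4 ≤ c*((c*Ns)*w2) := by
    calc E3*E4 ≤ E3*(c*E3) := mul_le_mul_of_nonneg_left hE4 hE3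
      _ = c*(E3*E3) := by ring
      _ ≤ c*((c*Ns)*w2) := mul_le_mul_of_nonneg_left hE33 hc
  have b2 : A1*(A2*((J3*A3)*(J4*A4))) ≤ (J1*A1)*((J2*A2)*((J3*A3)*(J4*A4))) := by
    have i2 : A2*((J3*A3)*(J4*A4)) ≤ (J2*A2)*((J3*A3)*(J4*A4)) :=
      mul_le_mul_of_nonneg_right (le_mul_of_one_le_left hA2 hJ2) P34
    exact mul_le_mul (le_mul_of_one_le_left hA1 hJ1) i2
      (mul_nonneg hA2 P34) (mul_nonneg (by linarith : (0:ℝ) ≤ J1) hA1)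
  calc K*A1*A2*A3*A4 = (K*(E3*E4))*(A1*(A2*((J3*A3)*(J4*A4)))) := e1
    _ ≤ ((3*minv)*(c*((c*Ns)*w2)))*((J1*A1)*((J2*A2)*((J3*A3)*(J4*A4)))) := by
        apply mul_le_mul (mul_le_mul hK b1 (mul_nonneg hE3 hE4nn) (by positivity)) b2
        · exact mul_nonneg hA1 (mul_nonneg hA2 P34)
        · positivity
    _ = 3*c*c*Ns*((minv*w2)*((J1*A1)*((J2*A2)*((J3*A3)*(J4*A4))))) := by ring
    _ = 3*c*c*Ns*(W*((J1*A1)*((J2*A2)*((J3*A3)*(J4*A4))))) := by rw [hW]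

lemma norm_int_complex (z : ℤ) : ‖((z:ℤ):ℂ)‖ = |(z:ℝ)| := by simp

lemma key (s₀ : ℝ) (hs₀ : 0 < s₀) (N : ℕ) (hN : 0 < N) (a : ℤ → ℂ)
    (n n1 n2 n3 : ℤ) (hn : (N:ℤ) < |n|) (hsum : n = n1 + n2 + n3)
    (hne : (n1+n2) * (n1+n3) * (n2+n3) ≠ 0)
    (h41 : 4*n1^2 ≤ |n3|) (h42 : 4*n2^2 ≤ |n3|) :
    ‖(((n * n3 : ℤ) : ℂ) / ((3 * (n1+n2) * (n1+n3) * (n2+n3) : ℤ) : ℂ)) *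
      a n1 * starRingEnd ℂ (a (-n2)) * a n3 * starRingEnd ℂ (a n)‖ ≤
    3 * 2^s₀ * 2^s₀ * (N:ℝ)^(-s₀) *
      (|((n1+n2 : ℤ) : ℝ)| ^ (-(1+2*s₀)) *
        ((jb ((n1:ℤ):ℝ) ^ s₀ * ‖a n1‖) * ((jb ((-n2 : ℤ):ℝ) ^ s₀ * ‖a (-n2)‖) *
          ((jb ((n3:ℤ):ℝ) ^ s₀ * ‖a n3‖) * (jb ((n:ℤ):ℝ) ^ s₀ * ‖a n‖))))) := by
  -- integer facts
  have hm : n1 + n2 ≠ 0 := by intro h; apply hne; rw [h]; ring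
  have hm1 : 1 ≤ |n1+n2| := Int.one_le_abs hm
  have h4t : 4 ≤ |n3| := by
    rcases eq_or_ne n1 0 with h1 | h1
    · have h2 : n2 ≠ 0 := by rw [h1] at hm; simpa using hm
      have : 1 ≤ |n2| := Int.one_le_abs h2
      nlinarith [abs_nonneg n2, sq_abs n2]
    · have : 1 ≤ |n1| := Int.one_le_abs h1
      nlinarith [abs_nonneg n1, sq_abs n1]
  have hk2 : (|n1| + |n2|)^2 ≤ |n3| := by
    nlinarith [sq_abs n1, sq_abs n2, sq_nonneg (|n1| - |n2|)]
  have hk : 2*(|n1| + |n2|) ≤ |n3| := by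
    nlinarith [sq_nonneg (|n1| + |n2| - 2)]
  have habsm : |n1+n2| ≤ |n1| + |n2| := abs_add_le _ _
  have hm2 : (n1+n2)^2 ≤ |n3| := by
    nlinarith [sq_abs (n1+n2), abs_nonneg (n1+n2), abs_nonneg n1, abs_nonneg n2]
  have hnup : |n| ≤ 2*|n3| := by
    have : |n| ≤ |n1+n2| + |n3| := by rw [hsum]; exact abs_add_le _ _
    linarith
  have hnlow : |n3| ≤ 2*|n| := by
    have h' : |n3| ≤ |n| + |n1+n2| := by
      have h'' : |n - (n1+n2)| ≤ |n| + |n1+n2| := abs_sub _ _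
      have h3 : n - (n1+n2) = n3 := by rw [hsum]; ring
      rwa [h3] at h''
    linarith
  have h13 : |n3| ≤ 2*|n1+n3| := by
    have : |n3| ≤ |n1+n3| + |n1| := by
      have := abs_sub (n1+n3) n1
      simpa using this
    linarith [abs_nonneg n1, abs_nonneg n2]
  have h23 : |n3| ≤ 2*|n2+n3| := by
    have : |n3| ≤ |n2+n3| + |n2| := by
      have := abs_sub (n2+n3) n2
      simpa using this
    linarith [abs_nonneg n1, abs_nonneg n2]
  have hker : |n| * |n3| ≤ 8 * (|n1+n3| * |n2+n3|) := by
    nlinarith [abs_nonneg n, abs_nonneg n3, abs_nonneg (n1+n3), abs_nonneg (n2+n3),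
      mul_nonneg (abs_nonneg (n1+n3)) (abs_nonneg (n2+n3))]
  have hNt : (N:ℤ) ≤ 2*|n3| := by linarith
  -- cast facts
  have cm : (1:ℝ) ≤ |((n1+n2 : ℤ):ℝ)| := by
    rw [← Int.cast_abs]; exact_mod_cast hm1
  have cm0 : (0:ℝ) < |((n1+n2 : ℤ):ℝ)| := lt_of_lt_of_le one_pos cm
  have c13 : (0:ℝ) < |((n1+n3 : ℤ):ℝ)| := by
    rw [abs_pos]
    exact_mod_cast (by intro h; apply hne; rw [h]; ring : n1+n3 ≠ 0)
  have c23 : (0:ℝ) < |((n2+n3 : ℤ):ℝ)| := by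
    rw [abs_pos]
    exact_mod_cast (by intro h; apply hne; rw [h]; ring : n2+n3 ≠ 0)
  have cker : |(n:ℝ)| * |(n3:ℝ)| ≤ 8 * (|((n1+n3:ℤ):ℝ)| * |((n2+n3:ℤ):ℝ)|) := by
    rw [← Int.cast_abs, ← Int.cast_abs, ← Int.cast_abs, ← Int.cast_abs]
    exact_mod_cast hker
  -- kernel bound
  have hkernel : ‖(((n * n3 : ℤ) : ℂ) / ((3 * (n1+n2) * (n1+n3) * (n2+n3) : ℤ) : ℂ))‖ ≤
      3 * (|((n1+n2 : ℤ):ℝ)|)⁻¹ := by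
    rw [norm_div]
    have hnum : ‖((n * n3 : ℤ) : ℂ)‖ = |(n:ℝ)| * |(n3:ℝ)| := by
      rw [norm_int_complex]
      push_cast
      exact abs_mul (n:ℝ) (n3:ℝ)
    have hden : ‖((3 * (n1+n2) * (n1+n3) * (n2+n3) : ℤ) : ℂ)‖ =
        3 * |((n1+n2:ℤ):ℝ)| * |((n1+n3:ℤ):ℝ)| * |((n2+n3:ℤ):ℝ)| := by
      rw [norm_int_complex]
      rw [show ((3 * (n1+n2) * (n1+n3) * (n2+n3) : ℤ):ℝ)
          = 3 * ((n1+n2:ℤ):ℝ) * ((n1+n3:ℤ):ℝ) * ((n2+n3:ℤ):ℝ) by push_cast; ring]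
      rw [abs_mul, abs_mul, abs_mul]
      norm_num
    rw [hnum, hden, div_le_iff₀ (by positivity)]
    have expand : 3 * (|((n1+n2 : ℤ):ℝ)|)⁻¹ *
        (3 * |((n1+n2:ℤ):ℝ)| * |((n1+n3:ℤ):ℝ)| * |((n2+n3:ℤ):ℝ)|) =
        9 * (|((n1+n3:ℤ):ℝ)| * |((n2+n3:ℤ):ℝ)|) := by
      calc 3 * (|((n1+n2 : ℤ):ℝ)|)⁻¹ *
          (3 * |((n1+n2:ℤ):ℝ)| * |((n1+n3:ℤ):ℝ)| * |((n2+n3:ℤ):ℝ)|)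
          = 9 * (|((n1+n3:ℤ):ℝ)| * |((n2+n3:ℤ):ℝ)|) * ((|((n1+n2:ℤ):ℝ)|)⁻¹ * |((n1+n2:ℤ):ℝ)|) := by
            ring
        _ = 9 * (|((n1+n3:ℤ):ℝ)| * |((n2+n3:ℤ):ℝ)|) := by
            rw [inv_mul_cancel₀ cm0.ne', mul_one]
    rw [expand]
    nlinarith [mul_nonneg c13.le c23.le]
  -- trades
  have trade_n : jb ((n:ℤ):ℝ) ^ (-s₀) ≤ 2^s₀ * jb ((n3:ℤ):ℝ) ^ (-s₀) := by
    apply half_rpow (jb_pos _) hs₀.le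
    apply jb_le_two_jb
    rw [← Int.cast_abs, ← Int.cast_abs]
    exact_mod_cast hnlow
  have trade_N : jb ((n3:ℤ):ℝ) ^ (-s₀) ≤ 2^s₀ * (N:ℝ) ^ (-s₀) := by
    apply half_rpow (by exact_mod_cast hN) hs₀.le
    calc ((N:ℕ):ℝ) ≤ 2 * |((n3:ℤ):ℝ)| := by
          rw [← Int.cast_abs]; exact_mod_cast hNt
      _ ≤ 2 * jb ((n3:ℤ):ℝ) := by linarith [abs_le_jb ((n3:ℤ):ℝ)]
  have trade_m : jb ((n3:ℤ):ℝ) ^ (-s₀) ≤ |((n1+n2:ℤ):ℝ)| ^ (-(2*s₀)) := by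
    apply sq_le_rpow_trade cm0 hs₀.le
    calc |((n1+n2:ℤ):ℝ)|^2 = ((n1+n2:ℤ):ℝ)^2 := sq_abs _
      _ ≤ |((n3:ℤ):ℝ)| := by rw [← Int.cast_abs]; exact_mod_cast hm2
      _ ≤ jb ((n3:ℤ):ℝ) := abs_le_jb _
  have wm_eq : (|((n1+n2:ℤ):ℝ)|)⁻¹ * |((n1+n2:ℤ):ℝ)| ^ (-(2*s₀)) =
      |((n1+n2:ℤ):ℝ)| ^ (-(1+2*s₀)) := by
    rw [show -(1+2*s₀) = (-1) + (-(2*s₀)) by ring, Real.rpow_add cm0, Real.rpow_neg_one]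
  -- assemble
  have LHSeq : ‖(((n * n3 : ℤ) : ℂ) / ((3 * (n1+n2) * (n1+n3) * (n2+n3) : ℤ) : ℂ)) *
      a n1 * starRingEnd ℂ (a (-n2)) * a n3 * starRingEnd ℂ (a n)‖ =
      ‖(((n * n3 : ℤ) : ℂ) / ((3 * (n1+n2) * (n1+n3) * (n2+n3) : ℤ) : ℂ))‖ *
      ‖a n1‖ * ‖a (-n2)‖ * ‖a n3‖ * ‖a n‖ := by
    simp [norm_mul]
  rw [LHSeq]
  apply assemble (norm_nonneg _) (norm_nonneg _) (norm_nonneg _) (norm_nonneg _)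
    (Real.rpow_nonneg (jb_nonneg _) _) (Real.rpow_nonneg (jb_nonneg _) _)
    (Real.rpow_nonneg (jb_nonneg _) _) (Real.rpow_nonneg (jb_nonneg _) _)
    (Real.rpow_nonneg (by norm_num) _) (Real.rpow_nonneg (by positivity) _)
    (Real.rpow_nonneg (abs_nonneg _) _) (by positivity)
    (norm_nonneg _) hkernel
    (by rw [← Real.rpow_add (jb_pos _), neg_add_cancel, Real.rpow_zero])
    (by rw [← Real.rpow_add (jb_pos _), neg_add_cancel, Real.rpow_zero])
    (Real.one_le_rpow (one_le_jb _) hs₀.le)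
    (Real.one_le_rpow (one_le_jb _) hs₀.le)
    trade_n
    (mul_le_mul trade_N trade_m (Real.rpow_nonneg (jb_nonneg _) _) (by positivity))
    wm_eq

lemma cs_aux {b : ℤ → ℝ} (hb : ∀ k, 0 ≤ b k) (hb2 : Summable fun k => b k ^ 2)
    (A : Finset ℤ) (g h : ℤ → ℤ) (hg : Function.Injective g) (hh : Function.Injective h) :
    ∑ u ∈ A, b (g u) * b (h u) ≤ ∑' k, b k ^ 2 := by
  set B := ∑' k, b k ^ 2 with hB
  have hBnn : 0 ≤ B := tsum_nonneg (fun k => sq_nonneg _)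
  have hg2 : ∑ u ∈ A, b (g u) ^ 2 ≤ B := by
    have e : ∑ k ∈ A.image g, b k ^ 2 = ∑ u ∈ A, b (g u) ^ 2 :=
      Finset.sum_image (fun x _ y _ hxy => hg hxy)
    calc ∑ u ∈ A, b (g u) ^ 2 = ∑ k ∈ A.image g, b k ^ 2 := e.symm
      _ ≤ B := Summable.sum_le_tsum _ (fun i _ => sq_nonneg _) hb2
  have hh2 : ∑ u ∈ A, b (h u) ^ 2 ≤ B := by
    have e : ∑ k ∈ A.image h, b k ^ 2 = ∑ u ∈ A, b (h u) ^ 2 :=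
      Finset.sum_image (fun x _ y _ hxy => hh hxy)
    calc ∑ u ∈ A, b (h u) ^ 2 = ∑ k ∈ A.image h, b k ^ 2 := e.symm
      _ ≤ B := Summable.sum_le_tsum _ (fun i _ => sq_nonneg _) hb2
  have hcs := Finset.sum_mul_sq_le_sq_mul_sq A (fun u => b (g u)) (fun u => b (h u))
  have ht : 0 ≤ ∑ u ∈ A, b (g u) * b (h u) :=
    Finset.sum_nonneg (fun u _ => mul_nonneg (hb _) (hb _))
  have hsq : (∑ u ∈ A, b (g u) * b (h u))^2 ≤ B^2 := by
    calc (∑ u ∈ A, b (g u) * b (h u))^2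
        ≤ (∑ u ∈ A, b (g u) ^ 2) * (∑ u ∈ A, b (h u) ^ 2) := hcs
      _ ≤ B * B := mul_le_mul hg2 hh2 (Finset.sum_nonneg (fun u _ => sq_nonneg _)) hBnn
      _ = B^2 := (sq B).symm
  calc ∑ u ∈ A, b (g u) * b (h u) = Real.sqrt ((∑ u ∈ A, b (g u) * b (h u))^2) :=
        (Real.sqrt_sq ht).symm
    _ ≤ Real.sqrt (B^2) := Real.sqrt_le_sqrt hsq
    _ = B := Real.sqrt_sq hBnn

lemma core (s₀ : ℝ) (hs₀ : 0 < s₀) :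
    ∃ C : ℝ, 0 < C ∧ ∀ N : ℕ, 0 < N → ∀ a : ℤ → ℂ,
      Summable (fun k : ℤ => (jb (k:ℝ) ^ s₀ * ‖a k‖) ^ 2) →
      (∑' x : {q : ℤ × ℤ × ℤ × ℤ //
          (N : ℤ) < |q.1| ∧ q.1 = q.2.1 + q.2.2.1 + q.2.2.2 ∧
          (q.2.1 + q.2.2.1) * (q.2.1 + q.2.2.2) * (q.2.2.1 + q.2.2.2) ≠ 0 ∧
          4 * q.2.1 ^ 2 ≤ |q.2.2.2| ∧ 4 * q.2.2.1 ^ 2 ≤ |q.2.2.2|},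
        ‖(((x.1.1 * x.1.2.2.2 : ℤ) : ℂ) /
            ((3 * (x.1.2.1 + x.1.2.2.1) * (x.1.2.1 + x.1.2.2.2) *
              (x.1.2.2.1 + x.1.2.2.2) : ℤ) : ℂ)) *
          a x.1.2.1 * starRingEnd ℂ (a (-x.1.2.2.1)) * a x.1.2.2.2 *
          starRingEnd ℂ (a x.1.1)‖)
      ≤ C * (N:ℝ)^(-s₀) * (∑' k : ℤ, (jb (k:ℝ) ^ s₀ * ‖a k‖)^2)^2 := by
  classical
  have hWs : Summable (fun m : ℤ => |(m:ℝ)| ^ (-(1+2*s₀))) :=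
    Real.summable_abs_int_rpow (by linarith)
  set W := ∑' m : ℤ, |(m:ℝ)| ^ (-(1+2*s₀)) with hWdef
  have hWnn : 0 ≤ W := tsum_nonneg (fun m => Real.rpow_nonneg (abs_nonneg _) _)
  refine ⟨3*2^s₀*2^s₀*(W+1), by positivity, ?_⟩
  intro N hN a hb2
  set b : ℤ → ℝ := fun k => jb (k:ℝ) ^ s₀ * ‖a k‖ with hbdef
  have hbnn : ∀ k, 0 ≤ b k := fun k => mul_nonneg (Real.rpow_nonneg (jb_nonneg _) _) (norm_nonneg _)
  set B := ∑' k : ℤ, b k ^ 2 with hBdef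
  have hBnn : 0 ≤ B := tsum_nonneg (fun k => sq_nonneg _)
  set Q : ℤ × ℤ × ℤ → ℝ := fun y =>
    |((y.1 : ℤ):ℝ)| ^ (-(1+2*s₀)) * (b y.2.1 * (b (-(y.1 - y.2.1)) * (b y.2.2 * b (y.1 + y.2.2))))
    with hQdef
  have hQnn : ∀ y, 0 ≤ Q y := by
    intro y
    apply mul_nonneg (Real.rpow_nonneg (abs_nonneg _) _)
    exact mul_nonneg (hbnn _) (mul_nonneg (hbnn _) (mul_nonneg (hbnn _) (hbnn _)))
  apply tsum_le_of_sum_le' (mul_nonneg (mul_nonneg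
    (mul_nonneg (by positivity : (0:ℝ) ≤ 3*2^s₀*2^s₀) (by linarith : (0:ℝ) ≤ W+1))
    (Real.rpow_nonneg (Nat.cast_nonneg N) _)) (sq_nonneg B))
  intro F
  -- step 1: pointwise bound
  have step1 : ∀ x ∈ F, ‖(((x.1.1 * x.1.2.2.2 : ℤ) : ℂ) /
            ((3 * (x.1.2.1 + x.1.2.2.1) * (x.1.2.1 + x.1.2.2.2) *
              (x.1.2.2.1 + x.1.2.2.2) : ℤ) : ℂ)) *
          a x.1.2.1 * starRingEnd ℂ (a (-x.1.2.2.1)) * a x.1.2.2.2 *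
          starRingEnd ℂ (a x.1.1)‖ ≤
      (3*2^s₀*2^s₀*(N:ℝ)^(-s₀)) * Q (x.1.2.1 + x.1.2.2.1, x.1.2.1, x.1.2.2.2) := by
    rintro ⟨⟨n, n1, n2, n3⟩, hx1, hx2, hx3, hx4, hx5⟩ _
    simp only at hx1 hx2 hx3 hx4 hx5 ⊢
    have e2 : -((n1 + n2) - n1) = -n2 := by ring
    have e4 : (n1 + n2) + n3 = n := by rw [hx2]
    have hQval : Q (n1 + n2, n1, n3) =
        |((n1+n2 : ℤ):ℝ)| ^ (-(1+2*s₀)) *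
        ((jb ((n1:ℤ):ℝ) ^ s₀ * ‖a n1‖) * ((jb ((-n2 : ℤ):ℝ) ^ s₀ * ‖a (-n2)‖) *
          ((jb ((n3:ℤ):ℝ) ^ s₀ * ‖a n3‖) * (jb ((n:ℤ):ℝ) ^ s₀ * ‖a n‖)))) := by
      rw [hQdef]
      simp only [hbdef]
      rw [e2, e4]
    rw [hQval, mul_assoc (3*2^s₀*2^s₀) ((N:ℝ)^(-s₀)) _, ← mul_assoc]
    exact key s₀ hs₀ N hN a n n1 n2 n3 hx1 hx2 hx3 hx4 hx5
  calc ∑ x ∈ F, ‖_‖ ≤ ∑ x ∈ F, (3*2^s₀*2^s₀*(N:ℝ)^(-s₀)) * Q (x.1.2.1 + x.1.2.2.1, x.1.2.1, x.1.2.2.2) :=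
        Finset.sum_le_sum step1
    _ = (3*2^s₀*2^s₀*(N:ℝ)^(-s₀)) * ∑ x ∈ F, Q (x.1.2.1 + x.1.2.2.1, x.1.2.1, x.1.2.2.2) := by
        rw [Finset.mul_sum]
    _ ≤ (3*2^s₀*2^s₀*(N:ℝ)^(-s₀)) * (W * B^2) := by
        apply mul_le_mul_of_nonneg_left _ (by positivity)
        -- main combinatorial estimate
        have hinj : ∀ x ∈ F, ∀ y ∈ F,
            ((x.1 : ℤ×ℤ×ℤ×ℤ).2.1 + (x.1 : ℤ×ℤ×ℤ×ℤ).2.2.1, (x.1 : ℤ×ℤ×ℤ×ℤ).2.1, (x.1 : ℤ×ℤ×ℤ×ℤ).2.2.2) =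
            ((y.1 : ℤ×ℤ×ℤ×ℤ).2.1 + (y.1 : ℤ×ℤ×ℤ×ℤ).2.2.1, (y.1 : ℤ×ℤ×ℤ×ℤ).2.1, (y.1 : ℤ×ℤ×ℤ×ℤ).2.2.2) → x = y := by
          rintro ⟨⟨n,n1,n2,n3⟩,hx⟩ _ ⟨⟨n',n1',n2',n3'⟩,hy⟩ _ hxy
          simp only [Prod.mk.injEq] at hxy
          obtain ⟨h1, h2, h3⟩ := hxy
          have hn2 : n2 = n2' := by omega
          have hxe : n = n1 + n2 + n3 := hx.2.1
          have hye : n' = n1' + n2' + n3' := hy.2.1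
          have hn : n = n' := by omega
          apply Subtype.ext
          simp only [Prod.mk.injEq]
          exact ⟨hn, h2, hn2, h3⟩
        have himg : ∑ x ∈ F, Q ((x.1 : ℤ×ℤ×ℤ×ℤ).2.1 + (x.1 : ℤ×ℤ×ℤ×ℤ).2.2.1, (x.1 : ℤ×ℤ×ℤ×ℤ).2.1, (x.1 : ℤ×ℤ×ℤ×ℤ).2.2.2)
            = ∑ y ∈ F.image (fun x => ((x.1 : ℤ×ℤ×ℤ×ℤ).2.1 + (x.1 : ℤ×ℤ×ℤ×ℤ).2.2.1, (x.1 : ℤ×ℤ×ℤ×ℤ).2.1, (x.1 : ℤ×ℤ×ℤ×ℤ).2.2.2)), Q y :=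
          (Finset.sum_image hinj).symm
        set G := F.image (fun x => ((x.1 : ℤ×ℤ×ℤ×ℤ).2.1 + (x.1 : ℤ×ℤ×ℤ×ℤ).2.2.1, (x.1 : ℤ×ℤ×ℤ×ℤ).2.1, (x.1 : ℤ×ℤ×ℤ×ℤ).2.2.2)) with hGdef
        set M := G.image Prod.fst with hMdef
        set U := G.image (fun y => y.2.1) with hUdef
        set V := G.image (fun y => y.2.2) with hVdef
        have hsub : G ⊆ M ×ˢ U ×ˢ V := by
          intro y hy
          rw [Finset.mem_product, Finset.mem_product]
          exact ⟨Finset.mem_image_of_mem _ hy,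
            Finset.mem_image_of_mem _ hy, Finset.mem_image_of_mem _ hy⟩
        have inner : ∀ m : ℤ, ∑ u ∈ U, ∑ v ∈ V, Q (m,u,v) ≤ |(m:ℝ)|^(-(1+2*s₀)) * (B*B) := by
          intro m
          have hwm : (0:ℝ) ≤ |(m:ℝ)|^(-(1+2*s₀)) := Real.rpow_nonneg (abs_nonneg _) _
          have hSv : ∑ v ∈ V, b v * b (m+v) ≤ B :=
            cs_aux hbnn hb2 V id (fun v => m+v) (fun x y hh => hh) (fun x y hh => by simpa using hh)
          have hSu : ∑ u ∈ U, b u * b (-(m-u)) ≤ B :=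
            cs_aux hbnn hb2 U id (fun u => -(m-u)) (fun x y hh => hh) (fun x y hh => by simpa using hh)
          calc ∑ u ∈ U, ∑ v ∈ V, Q (m,u,v)
              = ∑ u ∈ U, (|(m:ℝ)|^(-(1+2*s₀)) * (b u * b (-(m-u)))) * ∑ v ∈ V, (b v * b (m+v)) := by
                apply Finset.sum_congr rfl
                intro u _
                rw [Finset.mul_sum]
                apply Finset.sum_congr rfl
                intro v _
                simp only [hQdef]
                ring
            _ ≤ ∑ u ∈ U, (|(m:ℝ)|^(-(1+2*s₀)) * (b u * b (-(m-u)))) * B := by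
                apply Finset.sum_le_sum
                intro u _
                exact mul_le_mul_of_nonneg_left hSv
                  (mul_nonneg hwm (mul_nonneg (hbnn _) (hbnn _)))
            _ = (∑ u ∈ U, b u * b (-(m-u))) * (|(m:ℝ)|^(-(1+2*s₀)) * B) := by
                rw [Finset.sum_mul]
                apply Finset.sum_congr rfl
                intro u _
                ring
            _ ≤ B * (|(m:ℝ)|^(-(1+2*s₀)) * B) :=
                mul_le_mul_of_nonneg_right hSu (mul_nonneg hwm hBnn)
            _ = |(m:ℝ)|^(-(1+2*s₀)) * (B*B) := by ring
        calc ∑ x ∈ F, Q ((x.1 : ℤ×ℤ×ℤ×ℤ).2.1 + (x.1 : ℤ×ℤ×ℤ×ℤ).2.2.1, (x.1 : ℤ×ℤ×ℤ×ℤ).2.1, (x.1 : ℤ×ℤ×ℤ×ℤ).2.2.2)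
            = ∑ y ∈ G, Q y := himg
          _ ≤ ∑ y ∈ M ×ˢ U ×ˢ V, Q y :=
              Finset.sum_le_sum_of_subset_of_nonneg hsub (fun y _ _ => hQnn y)
          _ = ∑ m ∈ M, ∑ z ∈ U ×ˢ V, Q (m, z) := Finset.sum_product _ _ _
          _ = ∑ m ∈ M, ∑ u ∈ U, ∑ v ∈ V, Q (m, u, v) := by
              apply Finset.sum_congr rfl
              intro m _
              exact Finset.sum_product _ _ _
          _ ≤ ∑ m ∈ M, |(m:ℝ)|^(-(1+2*s₀)) * (B*B) := Finset.sum_le_sum (fun m _ => inner m)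
          _ = (∑ m ∈ M, |(m:ℝ)|^(-(1+2*s₀))) * (B*B) := by rw [← Finset.sum_mul]
          _ ≤ W * (B*B) := mul_le_mul_of_nonneg_right
              (Summable.sum_le_tsum M (fun i _ => Real.rpow_nonneg (abs_nonneg _) _) hWs)
              (mul_nonneg hBnn hBnn)
          _ = W * B^2 := by ring
    _ = (3*2^s₀*2^s₀*(N:ℝ)^(-s₀)*B^2) * W := by ring
    _ ≤ (3*2^s₀*2^s₀*(N:ℝ)^(-s₀)*B^2) * (W+1) :=
        mul_le_mul_of_nonneg_left (by linarith) (mul_nonneg (by positivity) (sq_nonneg B))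
    _ = 3*2^s₀*2^s₀*(W+1) * (N:ℝ)^(-s₀) * B^2 := by ring

lemma embed_le2 {p : ℝ} (hp1 : 1 ≤ p) (hp2 : p ≤ 2) (c : ℤ → ℝ) (hc : ∀ k, 0 ≤ c k)
    (hsum : Summable fun k => c k ^ p) :
    Summable (fun k => c k ^ 2) ∧ ∑' k, c k ^ 2 ≤ ((∑' k, c k ^ p) ^ (1/p))^2 := by
  have hp0 : 0 < p := lt_of_lt_of_le one_pos hp1
  set T := ∑' k, c k ^ p with hT
  have hT0 : 0 ≤ T := tsum_nonneg (fun k => Real.rpow_nonneg (hc k) _)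
  set S := T ^ (1/p) with hS
  have hS0 : 0 ≤ S := Real.rpow_nonneg hT0 _
  have hck : ∀ k, c k ≤ S := by
    intro k
    have h1 : c k ^ p ≤ T := Summable.le_tsum hsum k (fun j _ => Real.rpow_nonneg (hc j) _)
    have h2 : (c k ^ p) ^ (1/p) ≤ S :=
      Real.rpow_le_rpow (Real.rpow_nonneg (hc k) _) h1 (by positivity)
    rwa [← Real.rpow_mul (hc k), mul_one_div, div_self hp0.ne', Real.rpow_one] at h2
  have hkey : ∀ k, c k ^ 2 ≤ S ^ (2-p) * c k ^ p := by
    intro k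
    have e2 : ((2:ℝ)) = (2-p)+p := by ring
    calc (c k)^2 = (c k) ^ ((2:ℝ)) := by
          rw [← Real.rpow_natCast (c k) 2]; norm_num
      _ = (c k)^(2-p) * (c k)^p :=
          Real.rpow_of_add_eq (hc k) (by norm_num) (by ring)
      _ ≤ S^(2-p) * (c k)^p :=
          mul_le_mul_of_nonneg_right
            (Real.rpow_le_rpow (hc k) (hck k) (by linarith))
            (Real.rpow_nonneg (hc k) _)
  have hsum2 : Summable (fun k => c k ^ 2) :=
    Summable.of_nonneg_of_le (fun k => sq_nonneg _) hkey (hsum.mul_left _)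
  refine ⟨hsum2, ?_⟩
  have hTS : T = S ^ p := by
    rw [hS, ← Real.rpow_mul hT0, one_div, inv_mul_cancel₀ hp0.ne', Real.rpow_one]
  calc ∑' k, c k ^ 2 ≤ ∑' k, S ^ (2-p) * c k ^ p :=
        Summable.tsum_le_tsum hkey hsum2 (hsum.mul_left _)
    _ = S ^ (2-p) * T := tsum_mul_left
    _ = S ^ (2-p) * S ^ p := by rw [hTS]
    _ = S ^ ((2:ℝ)) := (Real.rpow_of_add_eq hS0 (by norm_num) (by ring)).symm
    _ = S ^ 2 := by rw [← Real.rpow_natCast S 2]; norm_num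

lemma embed_gt2 {p s : ℝ} (hp : 2 < p) :
    ∃ K : ℝ, 0 ≤ K ∧ (∀ (a' : ℤ → ℂ), Summable (fun k : ℤ => (jb (k:ℝ) ^ s * ‖a' k‖) ^ p) →
      Summable (fun k : ℤ => (jb (k:ℝ) ^ (s - 1/2 + 3/(4*p)) * ‖a' k‖) ^ 2) ∧
      ∑' k : ℤ, (jb (k:ℝ) ^ (s - 1/2 + 3/(4*p)) * ‖a' k‖) ^ 2 ≤
        K * ((∑' k : ℤ, (jb (k:ℝ) ^ s * ‖a' k‖) ^ p) ^ (1/p))^2) := by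
  have hp0 : 0 < p := by linarith
  have hp2 : (0:ℝ) < p - 2 := by linarith
  set s₀ := s - 1/2 + 3/(4*p) with hs₀def
  set r := p/(p-2) with hrdef
  have hr1 : 1 < r := (one_lt_div hp2).mpr (by linarith)
  have hpq : Real.HolderConjugate r (p/2) := by
    rw [Real.holderConjugate_iff]
    constructor
    · exact hr1
    · rw [hrdef]
      field_simp
      ring
  have ht1 : 1 < 2*(s-s₀)*r := by
    rw [hrdef, show 2*(s-s₀)*(p/(p-2)) = (2*(s-s₀)*p)/(p-2) by ring,
      lt_div_iff₀ hp2]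
    have e : 2*(s-s₀)*p = p - 3/2 := by rw [hs₀def]; field_simp; ring
    rw [e]; linarith
  have hfs : Summable (fun k : ℤ => (jb (k:ℝ) ^ (-(2*(s-s₀)))) ^ r) := by
    apply (summable_jb_rpow ht1).congr
    intro k
    rw [← Real.rpow_mul (jb_nonneg _)]
    congr 1
    ring
  refine ⟨(∑' k : ℤ, (jb (k:ℝ) ^ (-(2*(s-s₀)))) ^ r) ^ (1/r), Real.rpow_nonneg
    (tsum_nonneg (fun k => Real.rpow_nonneg (Real.rpow_nonneg (jb_nonneg _) _) _)) _, ?_⟩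
  intro a' hsum'
  have hgs : Summable (fun k : ℤ => ((jb (k:ℝ) ^ s * ‖a' k‖) ^ 2) ^ (p/2)) := by
    apply hsum'.congr
    intro k
    rw [← Real.rpow_natCast (jb (k:ℝ) ^ s * ‖a' k‖) 2,
      ← Real.rpow_mul (mul_nonneg (Real.rpow_nonneg (jb_nonneg _) _) (norm_nonneg _))]
    norm_num
    rw [show ((2:ℝ)) * (p/2) = p by ring]
  have hfnn : ∀ k : ℤ, 0 ≤ jb (k:ℝ) ^ (-(2*(s-s₀))) := fun k => Real.rpow_nonneg (jb_nonneg _) _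
  have hgnn : ∀ k : ℤ, (0:ℝ) ≤ (jb (k:ℝ) ^ s * ‖a' k‖) ^ 2 := fun k => sq_nonneg _
  obtain ⟨hs1, hs2⟩ := Real.summable_and_inner_le_Lp_mul_Lq_tsum_of_nonneg hpq hfnn hgnn hfs hgs
  have hfg : ∀ k : ℤ, (jb (k:ℝ) ^ s₀ * ‖a' k‖) ^ 2 =
      jb (k:ℝ) ^ (-(2*(s-s₀))) * (jb (k:ℝ) ^ s * ‖a' k‖) ^ 2 := by
    intro k
    rw [mul_pow, mul_pow, ← Real.rpow_natCast (jb (k:ℝ) ^ s₀) 2,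
      ← Real.rpow_natCast (jb (k:ℝ) ^ s) 2,
      ← Real.rpow_mul (jb_nonneg _), ← Real.rpow_mul (jb_nonneg _),
      ← mul_assoc, ← Real.rpow_add (jb_pos _)]
    congr 2
    push_cast
    ring
  constructor
  · exact hs1.congr (fun k => (hfg k).symm)
  · calc ∑' k : ℤ, (jb (k:ℝ) ^ s₀ * ‖a' k‖) ^ 2
        = ∑' k : ℤ, jb (k:ℝ) ^ (-(2*(s-s₀))) * (jb (k:ℝ) ^ s * ‖a' k‖) ^ 2 := by
          apply tsum_congr hfg
      _ ≤ (∑' k : ℤ, (jb (k:ℝ) ^ (-(2*(s-s₀)))) ^ r) ^ (1/r) *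
          (∑' k : ℤ, ((jb (k:ℝ) ^ s * ‖a' k‖) ^ 2) ^ (p/2)) ^ (1/(p/2)) := hs2
      _ = (∑' k : ℤ, (jb (k:ℝ) ^ (-(2*(s-s₀)))) ^ r) ^ (1/r) *
          ((∑' k : ℤ, (jb (k:ℝ) ^ s * ‖a' k‖) ^ p) ^ (1/p))^2 := by
          have hgp : ∀ k : ℤ, ((jb (k:ℝ) ^ s * ‖a' k‖) ^ 2) ^ (p/2)
              = (jb (k:ℝ) ^ s * ‖a' k‖) ^ p := by
            intro k
            rw [← Real.rpow_natCast (jb (k:ℝ) ^ s * ‖a' k‖) 2,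
              ← Real.rpow_mul (mul_nonneg (Real.rpow_nonneg (jb_nonneg _) _) (norm_nonneg _))]
            norm_num
            rw [show ((2:ℝ)) * (p/2) = p by ring]
          congr 1
          rw [tsum_congr hgp,
            ← Real.rpow_natCast ((∑' k : ℤ, (jb (k:ℝ) ^ s * ‖a' k‖) ^ p) ^ (1/p)) 2,
            ← Real.rpow_mul (tsum_nonneg (fun k => Real.rpow_nonneg
              (mul_nonneg (Real.rpow_nonneg (jb_nonneg _) _) (norm_nonneg _)) _))]
          congr 1
          push_cast
          field_simp

theorem stmt15 (p s : ℝ)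
    (hcond : (1 ≤ p ∧ p ≤ 2 ∧ 0 < s) ∨ (2 < p ∧ 1 / 2 - 1 / (2 * p) < s)) :
    ∃ C : ℝ, 0 < C ∧ ∃ ε : ℝ, 0 < ε ∧ ∀ N : ℕ, 0 < N → ∀ a : ℤ → ℂ,
      Summable (fun n : ℤ => (jb (n : ℝ) ^ s * ‖a n‖) ^ p) →
      ‖∑' x : {q : ℤ × ℤ × ℤ × ℤ //
          (N : ℤ) < |q.1| ∧ q.1 = q.2.1 + q.2.2.1 + q.2.2.2 ∧
          (q.2.1 + q.2.2.1) * (q.2.1 + q.2.2.2) * (q.2.2.1 + q.2.2.2) ≠ 0 ∧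
          4 * q.2.1 ^ 2 ≤ |q.2.2.2| ∧ 4 * q.2.2.1 ^ 2 ≤ |q.2.2.2|},
        (((x.1.1 * x.1.2.2.2 : ℤ) : ℂ) /
            ((3 * (x.1.2.1 + x.1.2.2.1) * (x.1.2.1 + x.1.2.2.2) *
              (x.1.2.2.1 + x.1.2.2.2) : ℤ) : ℂ)) *
          a x.1.2.1 * starRingEnd ℂ (a (-x.1.2.2.1)) * a x.1.2.2.2 *
          starRingEnd ℂ (a x.1.1)‖ ≤
        C * (N : ℝ) ^ (-ε) *
          ((∑' n : ℤ, (jb (n : ℝ) ^ s * ‖a n‖) ^ p) ^ (1 / p)) ^ 4 := by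
  have hmain : ∃ s₀ : ℝ, 0 < s₀ ∧ ∃ K : ℝ, 0 ≤ K ∧ ∀ a : ℤ → ℂ,
      Summable (fun n : ℤ => (jb (n:ℝ) ^ s * ‖a n‖) ^ p) →
      Summable (fun k : ℤ => (jb (k:ℝ) ^ s₀ * ‖a k‖) ^ 2) ∧
      ∑' k : ℤ, (jb (k:ℝ) ^ s₀ * ‖a k‖) ^ 2 ≤
        K * ((∑' n : ℤ, (jb (n:ℝ) ^ s * ‖a n‖) ^ p) ^ (1/p))^2 := by
    rcases hcond with ⟨hp1, hp2, hspos⟩ | ⟨hp, hs⟩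
    · refine ⟨s, hspos, 1, zero_le_one, ?_⟩
      intro a hsum
      have hc : ∀ k : ℤ, 0 ≤ jb (k:ℝ) ^ s * ‖a k‖ :=
        fun k => mul_nonneg (Real.rpow_nonneg (jb_nonneg _) _) (norm_nonneg _)
      obtain ⟨h1, h2⟩ := embed_le2 hp1 hp2 _ hc hsum
      exact ⟨h1, by rw [one_mul]; exact h2⟩
    · have hp0 : (0:ℝ) < p := by linarith
      have hs₀pos : 0 < s - 1/2 + 3/(4*p) := by
        have e : 3/(4*p) - 1/(2*p) = 1/(4*p) := by field_simp; ring
        have h2 : (0:ℝ) < 1/(4*p) := by positivity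
        linarith
      obtain ⟨K, hK, hKP⟩ := embed_gt2 (s := s) hp
      exact ⟨s - 1/2 + 3/(4*p), hs₀pos, K, hK, hKP⟩
  obtain ⟨s₀, hs₀, K, hK, hKP⟩ := hmain
  obtain ⟨C, hC, hcore⟩ := core s₀ hs₀
  refine ⟨C*(K+1)^2, by positivity, s₀, hs₀, ?_⟩
  intro N hN a hsum
  obtain ⟨hb2, hble⟩ := hKP a hsum
  have hMnn : 0 ≤ (∑' n : ℤ, (jb (n:ℝ) ^ s * ‖a n‖) ^ p) ^ (1/p) :=
    Real.rpow_nonneg (tsum_nonneg (fun k => Real.rpow_nonneg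
      (mul_nonneg (Real.rpow_nonneg (jb_nonneg _) _) (norm_nonneg _)) _)) _
  by_cases hf : Summable (fun x : {q : ℤ × ℤ × ℤ × ℤ //
          (N : ℤ) < |q.1| ∧ q.1 = q.2.1 + q.2.2.1 + q.2.2.2 ∧
          (q.2.1 + q.2.2.1) * (q.2.1 + q.2.2.2) * (q.2.2.1 + q.2.2.2) ≠ 0 ∧
          4 * q.2.1 ^ 2 ≤ |q.2.2.2| ∧ 4 * q.2.2.1 ^ 2 ≤ |q.2.2.2|} =>
        (((x.1.1 * x.1.2.2.2 : ℤ) : ℂ) /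
            ((3 * (x.1.2.1 + x.1.2.2.1) * (x.1.2.1 + x.1.2.2.2) *
              (x.1.2.2.1 + x.1.2.2.2) : ℤ) : ℂ)) *
          a x.1.2.1 * starRingEnd ℂ (a (-x.1.2.2.1)) * a x.1.2.2.2 *
          starRingEnd ℂ (a x.1.1))
  · calc ‖∑' x : {q : ℤ × ℤ × ℤ × ℤ //
          (N : ℤ) < |q.1| ∧ q.1 = q.2.1 + q.2.2.1 + q.2.2.2 ∧
          (q.2.1 + q.2.2.1) * (q.2.1 + q.2.2.2) * (q.2.2.1 + q.2.2.2) ≠ 0 ∧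
          4 * q.2.1 ^ 2 ≤ |q.2.2.2| ∧ 4 * q.2.2.1 ^ 2 ≤ |q.2.2.2|},
        (((x.1.1 * x.1.2.2.2 : ℤ) : ℂ) /
            ((3 * (x.1.2.1 + x.1.2.2.1) * (x.1.2.1 + x.1.2.2.2) *
              (x.1.2.2.1 + x.1.2.2.2) : ℤ) : ℂ)) *
          a x.1.2.1 * starRingEnd ℂ (a (-x.1.2.2.1)) * a x.1.2.2.2 *
          starRingEnd ℂ (a x.1.1)‖
        ≤ ∑' x : {q : ℤ × ℤ × ℤ × ℤ //
          (N : ℤ) < |q.1| ∧ q.1 = q.2.1 + q.2.2.1 + q.2.2.2 ∧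
          (q.2.1 + q.2.2.1) * (q.2.1 + q.2.2.2) * (q.2.2.1 + q.2.2.2) ≠ 0 ∧
          4 * q.2.1 ^ 2 ≤ |q.2.2.2| ∧ 4 * q.2.2.1 ^ 2 ≤ |q.2.2.2|},
        ‖(((x.1.1 * x.1.2.2.2 : ℤ) : ℂ) /
            ((3 * (x.1.2.1 + x.1.2.2.1) * (x.1.2.1 + x.1.2.2.2) *
              (x.1.2.2.1 + x.1.2.2.2) : ℤ) : ℂ)) *
          a x.1.2.1 * starRingEnd ℂ (a (-x.1.2.2.1)) * a x.1.2.2.2 *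
          starRingEnd ℂ (a x.1.1)‖ := norm_tsum_le_tsum_norm (summable_norm_iff.mpr hf)
      _ ≤ C * (N:ℝ)^(-s₀) * (∑' k : ℤ, (jb (k:ℝ) ^ s₀ * ‖a k‖)^2)^2 := hcore N hN a hb2
      _ ≤ C * (N:ℝ)^(-s₀) * ((K+1) * ((∑' n : ℤ, (jb (n:ℝ) ^ s * ‖a n‖) ^ p) ^ (1/p))^2)^2 := by
          apply mul_le_mul_of_nonneg_left _ (mul_nonneg hC.le (Real.rpow_nonneg (Nat.cast_nonneg N) _))
          apply pow_le_pow_left₀ (tsum_nonneg (fun k => sq_nonneg _))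
          calc ∑' k : ℤ, (jb (k:ℝ) ^ s₀ * ‖a k‖)^2
              ≤ K * ((∑' n : ℤ, (jb (n:ℝ) ^ s * ‖a n‖) ^ p) ^ (1/p))^2 := hble
            _ ≤ (K+1) * ((∑' n : ℤ, (jb (n:ℝ) ^ s * ‖a n‖) ^ p) ^ (1/p))^2 := by
                apply mul_le_mul_of_nonneg_right (by linarith) (sq_nonneg _)
      _ = C*(K+1)^2 * (N:ℝ)^(-s₀) * ((∑' n : ℤ, (jb (n:ℝ) ^ s * ‖a n‖) ^ p) ^ (1/p))^4 := by
          ring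
  · rw [tsum_eq_zero_of_not_summable hf, norm_zero]
    apply mul_nonneg (mul_nonneg (by positivity) (Real.rpow_nonneg (Nat.cast_nonneg N) _))
    positivity
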